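/- For a T0 space X, the following are equivalent: (1) X is well-filtered; (2) every closed well-filtered determined subset of X is the closure of a single point; (3) every closed Rudin subset of X is the closure of a single point. -/

import Mathlib

open Set

universe u

variable {α : Type u}

/-- The specialization order used in the paper: `x ≤ y` iff `x ∈ closure {y}`. -/
def specLE [TopologicalSpace α] (x y : α) : Prop := x ∈ closure ({y} : Set α)

/-- `↑x = {y | x ≤ y}` in the specialization order. -/
def upOf [TopologicalSpace α] (x : α) : Set α := {y | specLE x y}

/-- `↑F = {y | ∃ a ∈ F, a ≤ y}` in the specialization order. -/
def upSetOf [TopologicalSpace α] (F : Set α) : Set α := {y | ∃ a ∈ F, specLE a y}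

/-- `↓B = {x | ∃ b ∈ B, x ≤ b}` in the specialization order. -/
def downOf [TopologicalSpace α] (B : Set α) : Set α := {x | ∃ b ∈ B, specLE x b}

/-- A set directed with respect to the specialization order: nonempty, and any two
elements have an upper bound in it. -/
def SDirected [TopologicalSpace α] (D : Set α) : Prop :=
  D.Nonempty ∧ ∀ a ∈ D, ∀ b ∈ D, ∃ c ∈ D, specLE a c ∧ specLE b c

/-- `s` is a supremum (least upper bound) of `D` in the specialization order. -/
def SIsSup [TopologicalSpace α] (D : Set α) (s : α) : Prop :=
  (∀ d ∈ D, specLE d s) ∧ ∀ t : α, (∀ d ∈ D, specLE d t) → specLE s t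

/-- Upper set (= saturated set) in the specialization order. -/
def SUpper [TopologicalSpace α] (A : Set α) : Prop :=
  ∀ ⦃x y : α⦄, x ∈ A → specLE x y → y ∈ A

/-- Scott open set with respect to the specialization order. -/
def SScottOpen [TopologicalSpace α] (U : Set α) : Prop :=
  SUpper U ∧ ∀ D : Set α, SDirected D → ∀ s : α, SIsSup D s → s ∈ U → (D ∩ U).Nonempty

/-- A d-space: a dcpo under the specialization order, all open sets Scott open. -/
def IsDSpace (α : Type u) [TopologicalSpace α] : Prop :=
  (∀ D : Set α, SDirected D → ∃ s : α, SIsSup D s) ∧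
    ∀ U : Set α, IsOpen U → SScottOpen U

/-- Member of `K(X)`: nonempty, compact and saturated. -/
def IsKSet [TopologicalSpace α] (K : Set α) : Prop :=
  K.Nonempty ∧ IsCompact K ∧ SUpper K

/-- A filtered family of sets: nonempty, and any two members contain a common member. -/
def FilteredFam (𝒦 : Set (Set α)) : Prop :=
  𝒦.Nonempty ∧ ∀ K1 ∈ 𝒦, ∀ K2 ∈ 𝒦, ∃ K3 ∈ 𝒦, K3 ⊆ K1 ∩ K2

/-- Well-filtered space: for every filtered family of nonempty compact saturated sets whose
intersection is contained in an open `U`, some member is contained in `U`. -/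
def IsWellFiltered (α : Type u) [TopologicalSpace α] : Prop :=
  ∀ 𝒦 : Set (Set α), (∀ K ∈ 𝒦, IsKSet K) → FilteredFam 𝒦 →
    ∀ U : Set α, IsOpen U → ⋂₀ 𝒦 ⊆ U → ∃ K ∈ 𝒦, K ⊆ U

/-- Rudin set: a nonempty set `A` such that for some filtered family `𝒦 ⊆ K(X)`,
`closure A` is a minimal closed set meeting every member of `𝒦`. -/
def IsRudin [TopologicalSpace α] (A : Set α) : Prop :=
  A.Nonempty ∧ ∃ 𝒦 : Set (Set α), (∀ K ∈ 𝒦, IsKSet K) ∧ FilteredFam 𝒦 ∧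
    (∀ K ∈ 𝒦, (closure A ∩ K).Nonempty) ∧
    ∀ B : Set α, IsClosed B → B ⊆ closure A → (∀ K ∈ 𝒦, (B ∩ K).Nonempty) → B = closure A

/-- Well-filtered determined set: every continuous map into a well-filtered T0 space sends it
to a set whose closure is the closure of a unique point. -/
def IsWFD [TopologicalSpace α] (A : Set α) : Prop :=
  ∀ (Y : Type u) [TopologicalSpace Y] [T0Space Y], IsWellFiltered Y →
    ∀ f : α → Y, Continuous f → ∃! y : Y, closure (f '' A) = closure ({y} : Set Y)

/-- Irreducible set. -/
def IsIrred [TopologicalSpace α] (A : Set α) : Prop :=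
  A.Nonempty ∧ ∀ F1 F2 : Set α, IsClosed F1 → IsClosed F2 → A ⊆ F1 ∪ F2 → A ⊆ F1 ∨ A ⊆ F2

/-- Sober space: every irreducible closed set is the closure of a unique point. -/
def IsSober (α : Type u) [TopologicalSpace α] : Prop :=
  ∀ A : Set α, IsClosed A → IsIrred A → ∃! x : α, A = closure ({x} : Set α)

/-- `A` has a maximal element with respect to the specialization order. -/
def HasMaxElem [TopologicalSpace α] (A : Set α) : Prop :=
  ∃ m ∈ A, ∀ a ∈ A, specLE m a → a = m

/-- Strong d-space. -/
def IsStrongDSpace (α : Type u) [TopologicalSpace α] : Prop :=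
  ∀ D : Set α, SDirected D → ∀ x : α, ∀ U : Set α, IsOpen U →
    (⋂ d ∈ D, upOf d) ∩ upOf x ⊆ U → ∃ d ∈ D, upOf d ∩ upOf x ⊆ U

section Aux

variable [TopologicalSpace α]

lemma specLE_refl' (x : α) : specLE x x := subset_closure rfl

lemma specLE_trans' {x y z : α} (h1 : specLE x y) (h2 : specLE y z) : specLE x z := by
  have h : closure ({y} : Set α) ⊆ closure {z} :=
    closure_minimal (singleton_subset_iff.2 h2) isClosed_closure
  exact h h1

lemma sUpper_of_isOpen {U : Set α} (hU : IsOpen U) : SUpper U := by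
  intro x y hx hxy
  by_contra hy
  have h : closure ({y} : Set α) ⊆ Uᶜ :=
    closure_minimal (singleton_subset_iff.2 hy) (isClosed_compl_iff.2 hU)
  exact h hxy hx

lemma subset_upSetOf (S : Set α) : S ⊆ upSetOf S :=
  fun a ha => ⟨a, ha, specLE_refl' a⟩

lemma sUpper_upSetOf (S : Set α) : SUpper (upSetOf S) := by
  rintro x y ⟨a, haS, hax⟩ hxy
  exact ⟨a, haS, specLE_trans' hax hxy⟩

lemma upSetOf_mono {S T : Set α} (h : S ⊆ T) : upSetOf S ⊆ upSetOf T := by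
  rintro y ⟨a, haS, hay⟩
  exact ⟨a, h haS, hay⟩

lemma upSetOf_subset_of_isOpen {S U : Set α} (hU : IsOpen U) (h : S ⊆ U) :
    upSetOf S ⊆ U := by
  rintro y ⟨a, haS, hay⟩
  exact sUpper_of_isOpen hU (h haS) hay

lemma isCompact_upSetOf {S : Set α} (hS : IsCompact S) : IsCompact (upSetOf S) := by
  refine isCompact_of_finite_subcover fun {ι} U hU hcov => ?_
  obtain ⟨t, ht⟩ := hS.elim_finite_subcover U hU ((subset_upSetOf S).trans hcov)
  exact ⟨t, upSetOf_subset_of_isOpen (isOpen_biUnion fun i _ => hU i) ht⟩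

/-- A chain of closed sets each meeting a compact set has intersection meeting it. -/
lemma chain_inter_compact {K : Set α} (hK : IsCompact K) (hKne : K.Nonempty)
    (c : Set (Set α)) (hcc : IsChain (· ⊆ ·) c) (hcl : ∀ C ∈ c, IsClosed C)
    (hne : ∀ C ∈ c, (C ∩ K).Nonempty) : (K ∩ ⋂ C : c, (C : Set α)).Nonempty := by
  refine hK.inter_iInter_nonempty _ (fun C => hcl C C.2) fun u => ?_
  rcases u.eq_empty_or_nonempty with rfl | hu
  · simpa using hKne
  · -- a nonempty finite subset of a chain has a least element
    obtain ⟨C0, hC0u, hC0min⟩ :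
        ∃ C0 ∈ u, ∀ C ∈ u, (C0 : Set α) ⊆ (C : Set α) := by
      classical
      induction hu using Finset.Nonempty.cons_induction with
      | singleton C => exact ⟨C, Finset.mem_singleton_self C, by
          intro C' hC'; rw [Finset.mem_singleton] at hC'; subst hC'; rfl⟩
      | cons C u hCu hune ih =>
        obtain ⟨C0, hC0u, hC0min⟩ := ih
        rcases hcc.total C.2 C0.2 with h | h
        · exact ⟨C, Finset.mem_cons_self _ _, fun C' hC' => by
            rcases Finset.mem_cons.1 hC' with rfl | hmem
            · rfl
            · exact h.trans (hC0min C' hmem)⟩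
        · exact ⟨C0, Finset.mem_cons.2 (Or.inr hC0u), fun C' hC' => by
            rcases Finset.mem_cons.1 hC' with rfl | hmem
            · exact h
            · exact hC0min C' hmem⟩
    obtain ⟨x, hxC0, hxK⟩ := hne C0 C0.2
    exact ⟨x, hxK, mem_biInter fun C hC => hC0min C hC hxC0⟩

/-- Every closed Rudin set is well-filtered determined. -/
lemma isWFD_of_isRudin [T0Space α] {A : Set α} (hA : IsClosed A) (hR : IsRudin A) :
    IsWFD A := by
  intro Y _ _ hY f hf
  obtain ⟨hAne, 𝒦, hKs, hfil, hmeet, hmin⟩ := hR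
  rw [hA.closure_eq] at hmeet
  -- the transported family in Y
  set g : Set α → Set Y := fun K => upSetOf (f '' (K ∩ A)) with hg
  have hgK : ∀ K ∈ 𝒦, IsKSet (g K) := by
    intro K hKm
    obtain ⟨a, haA, haK⟩ := hmeet K hKm
    exact ⟨⟨f a, subset_upSetOf _ ⟨a, ⟨haK, haA⟩, rfl⟩⟩,
      isCompact_upSetOf (((hKs K hKm).2.1.inter_right hA).image hf),
      sUpper_upSetOf _⟩
  have hgfil : FilteredFam (g '' 𝒦) := by
    refine ⟨hfil.1.image g, ?_⟩
    rintro _ ⟨K1, hK1, rfl⟩ _ ⟨K2, hK2, rfl⟩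
    obtain ⟨K3, hK3, hsub⟩ := hfil.2 K1 hK1 K2 hK2
    exact ⟨g K3, mem_image_of_mem g hK3,
      subset_inter
        (upSetOf_mono (image_mono (f := f) (inter_subset_inter_left A (hsub.trans inter_subset_left))))
        (upSetOf_mono (image_mono (f := f) (inter_subset_inter_left A (hsub.trans inter_subset_right))))⟩
  -- find y in the intersection of the transported family and in closure (f '' A)
  have hnot : ¬ ⋂₀ (g '' 𝒦) ⊆ (closure (f '' A))ᶜ := by
    intro hsub
    obtain ⟨K', hK'm, hK'sub⟩ := hY (g '' 𝒦) (by rintro _ ⟨K, hKm, rfl⟩; exact hgK K hKm)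
      hgfil _ isClosed_closure.isOpen_compl hsub
    obtain ⟨K, hKm, rfl⟩ := hK'm
    obtain ⟨a, haA, haK⟩ := hmeet K hKm
    exact hK'sub (subset_upSetOf _ ⟨a, ⟨haK, haA⟩, rfl⟩)
      (subset_closure ⟨a, haA, rfl⟩)
  rw [not_subset] at hnot
  obtain ⟨y, hy𝒦, hycl⟩ := hnot
  rw [notMem_compl_iff] at hycl
  have hAsub : closure A = f ⁻¹' (closure {y}) ∩ A := by
    refine (hmin (f ⁻¹' (closure {y}) ∩ A) ((isClosed_closure.preimage hf).inter hA)
      (by rw [hA.closure_eq]; exact inter_subset_right) ?_).symm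
    intro K hKm
    obtain ⟨b, ⟨a, ⟨haK, haA⟩, rfl⟩, hby⟩ := hy𝒦 (g K) (mem_image_of_mem g hKm)
    exact ⟨a, ⟨hby, haA⟩, haK⟩
  have h1 : closure (f '' A) ⊆ closure {y} := by
    refine closure_minimal ?_ isClosed_closure
    rintro _ ⟨a, haA, rfl⟩
    have : a ∈ f ⁻¹' (closure {y}) ∩ A := by
      rw [← hAsub, hA.closure_eq]; exact haA
    exact this.1
  have h2 : closure ({y} : Set Y) ⊆ closure (f '' A) :=
    closure_minimal (singleton_subset_iff.2 hycl) isClosed_closure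
  refine ⟨y, h1.antisymm h2, fun y' hy' => ?_⟩
  exact (inseparable_iff_closure_eq.2 (hy'.symm.trans (h1.antisymm h2))).eq

end Aux

/-- characterizations of well-filtered spaces. -/
theorem stmt_9 (α : Type u) [TopologicalSpace α] [T0Space α] :
    List.TFAE
      [ IsWellFiltered α,
        ∀ A : Set α, IsClosed A → IsWFD A → ∃ x : α, A = closure ({x} : Set α),
        ∀ A : Set α, IsClosed A → IsRudin A → ∃ x : α, A = closure ({x} : Set α) ] := by
  tfae_have 1 → 2 := by
    intro h A hA hWFD
    obtain ⟨y, hy, -⟩ := hWFD α h id continuous_id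
    exact ⟨y, by rwa [image_id, hA.closure_eq] at hy⟩
  tfae_have 2 → 3 := by
    intro h2 A hA hR
    exact h2 A hA (isWFD_of_isRudin hA hR)
  tfae_have 3 → 1 := by
    intro h3 𝒦 hKs hfil U hU hsub
    by_contra hcon
    push_neg at hcon
    -- the family of closed subsets of Uᶜ meeting every member of 𝒦
    set S : Set (Set α) := {C | IsClosed C ∧ C ⊆ Uᶜ ∧ ∀ K ∈ 𝒦, (C ∩ K).Nonempty} with hS
    have hUc : Uᶜ ∈ S := by
      refine ⟨hU.isClosed_compl, Subset.rfl, fun K hKm => ?_⟩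
      obtain ⟨x, hxK, hxU⟩ := not_subset.1 (hcon K hKm)
      exact ⟨x, hxU, hxK⟩
    have hzorn : ∀ c ⊆ S, IsChain (· ⊆ ·) c → c.Nonempty →
        ∃ lb ∈ S, ∀ s ∈ c, lb ⊆ s := by
      intro c hcS hchain hcne
      refine ⟨⋂₀ c, ⟨isClosed_sInter fun C hC => (hcS hC).1, ?_, ?_⟩,
        fun s hs => sInter_subset_of_mem hs⟩
      · obtain ⟨C0, hC0⟩ := hcne
        exact (sInter_subset_of_mem hC0).trans (hcS hC0).2.1
      · intro K hKm
        obtain ⟨x, hxK, hxC⟩ := chain_inter_compact (hKs K hKm).2.1 (hKs K hKm).1 c hchain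
          (fun C hC => (hcS hC).1) (fun C hC => (hcS hC).2.2 K hKm)
        exact ⟨x, mem_sInter.2 fun C hC => mem_iInter.1 hxC ⟨C, hC⟩, hxK⟩
    obtain ⟨C, -, hCS, hCmin⟩ := zorn_superset_nonempty S hzorn _ hUc
    · -- C is a closed Rudin set
      obtain ⟨K0, hK0⟩ := hfil.1
      have hCR : IsRudin C := by
        refine ⟨?_, 𝒦, hKs, hfil, ?_, ?_⟩
        · obtain ⟨x, hx, -⟩ := hCS.2.2 K0 hK0
          exact ⟨x, hx⟩
        · rw [hCS.1.closure_eq]; exact hCS.2.2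
        · intro B hB hBsub hBmeet
          rw [hCS.1.closure_eq] at hBsub ⊢
          exact hBsub.antisymm (hCmin ⟨hB, hBsub.trans hCS.2.1, hBmeet⟩ hBsub)
      obtain ⟨x, hx⟩ := h3 C hCS.1 hCR
      have hxC : x ∈ C := by rw [hx]; exact subset_closure rfl
      have hx𝒦 : x ∈ ⋂₀ 𝒦 := by
        intro K hKm
        obtain ⟨a, haC, haK⟩ := hCS.2.2 K hKm
        rw [hx] at haC
        exact (hKs K hKm).2.2 haK haC
      exact hCS.2.1 hxC (hsub hx𝒦)
  tfae_finish
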